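/- Let V be a real vector space with a symmetric bilinear form B, and let a ∈ V satisfy B(a, a) > 0. Assume that B is negative semidefinite on the orthogonal complement of a: B(y, y) ≤ 0 for every y ∈ V with B(a, y) = 0. Then: (i) for every x ∈ V, B(a, x)² ≥ B(a, a) · B(x, x) (reverse Cauchy–Schwarz); and (ii) for every b ∈ V with B(b, b) > 0, B is negative semidefinite on the orthogonal complement of b, i.e. B(y, y) ≤ 0 for every y ∈ V with B(b, y) = 0. -/

import Mathlib

/-- Hyperbolic bilinear forms: if `B(a,a) > 0` and `B` is negative semidefinite on the
orthogonal complement of `a`, then reverse Cauchy–Schwarz holds, and the same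
semidefiniteness holds for the orthogonal complement of any `b` with `B(b,b) > 0`. -/
theorem stmt18 (V : Type*) [AddCommGroup V] [Module ℝ V]
    (B : V →ₗ[ℝ] V →ₗ[ℝ] ℝ) (hsymm : ∀ x y, B x y = B y x)
    (a : V) (ha : 0 < B a a)
    (hneg : ∀ y : V, B a y = 0 → B y y ≤ 0) :
    (∀ x : V, B a a * B x x ≤ (B a x) ^ 2) ∧
    (∀ b : V, 0 < B b b → ∀ y : V, B b y = 0 → B y y ≤ 0) := by
  have hCS : ∀ x : V, B a a * B x x ≤ (B a x) ^ 2 := by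
    intro x
    set c : ℝ := B a x / B a a with hc
    set y : V := x - c • a with hy
    have hay : B a y = 0 := by
      simp [hy, hc, map_sub, map_smul]
      field_simp; ring
    have hyy : B y y ≤ 0 := hneg y hay
    have hx : x = y + c • a := by simp [hy]
    have hxx : B x x = B y y + c ^ 2 * B a a := by
      rw [hx]
      simp [map_add, map_smul, hsymm y a, hay]
      ring
    have : B x x ≤ c ^ 2 * B a a := by linarith
    calc B a a * B x x ≤ B a a * (c ^ 2 * B a a) := by nlinarith
      _ = (B a x) ^ 2 := by rw [hc]; field_simp
  refine ⟨hCS, ?_⟩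
  intro b hb y hby
  by_contra h
  push_neg at h
  -- h : 0 < B y y
  set z : V := B a y • b - B a b • y with hz
  have haz : B a z = 0 := by simp [hz, map_sub, map_smul]; ring
  have hzz : B z z ≤ 0 := hneg z haz
  have hzz' : B z z = (B a y) ^ 2 * B b b + (B a b) ^ 2 * B y y := by
    simp [hz, map_sub, map_smul, hsymm y b, hby]
    ring
  have hab : B a b ≠ 0 := by
    intro h0
    have := hCS b
    rw [h0] at this
    nlinarith
  nlinarith [sq_nonneg (B a y), sq_nonneg (B a b), sq_pos_of_ne_zero hab]
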